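/- Let f : I → ℝ be a C² convex strictly increasing function on a real interval I with f''(x) ≥ δ > 0 for all x ∈ I. Then its inverse function g : f(I) → I is 1/2-Hölder continuous with constant √(2/δ), i.e., |g(x₂) - g(x₁)| ≤ √(2/δ)·|x₂ - x₁|^(1/2) for all x₁, x₂ ∈ f(I). -/

import Mathlib

open Set

private lemma strong_key {I : Set ℝ} (hI : I.OrdConnected)
    (f f' f'' : ℝ → ℝ) (δ : ℝ) (hδ : 0 < δ)
    (hder : ∀ x ∈ I, HasDerivAt f (f' x) x)
    (hder2 : ∀ x ∈ I, HasDerivAt f' (f'' x) x)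
    (hmono : StrictMonoOn f I)
    (hbound : ∀ x ∈ I, δ ≤ f'' x)
    {x₁ x₂ : ℝ} (hx₁ : x₁ ∈ I) (hx₂ : x₂ ∈ I) (hlt : x₁ < x₂) :
    δ / 2 * (x₂ - x₁) ^ 2 ≤ f x₂ - f x₁ := by
  have hsub : Icc x₁ x₂ ⊆ I := hI.out hx₁ hx₂
  -- f' x₁ ≥ 0
  have hf'0 : 0 ≤ f' x₁ := by
    have hd := hder x₁ hx₁
    have hslope : Filter.Tendsto (slope f x₁) (nhdsWithin x₁ (Ioi x₁)) (nhds (f' x₁)) :=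
      (hasDerivAt_iff_tendsto_slope.mp hd).mono_left
        (nhdsWithin_mono _ (fun y hy => ne_of_gt hy))
    refine ge_of_tendsto hslope ?_
    filter_upwards [Ioo_mem_nhdsGT_of_mem (by exact ⟨le_refl x₁, hlt⟩ : x₁ ∈ Ico x₁ x₂)]
      with y hy
    have hyI : y ∈ I := hsub ⟨hy.1.le, hy.2.le⟩
    have : f x₁ < f y := hmono hx₁ hyI hy.1
    have h4 : (0:ℝ) < y - x₁ := by linarith [hy.1]
    simp only [slope_def_field, div_eq_inv_mul]
    exact mul_nonneg (inv_nonneg.mpr h4.le) (by linarith)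
  -- auxiliary function
  set F : ℝ → ℝ := fun x => f x - (f' x₁ * (x - x₁) + δ / 2 * (x - x₁) ^ 2) with hF
  have hFder : ∀ t ∈ I, HasDerivAt F (f' t - (f' x₁ + δ * (t - x₁))) t := by
    intro t ht
    have h1 : HasDerivAt (fun x : ℝ => f' x₁ * (x - x₁)) (f' x₁) t := by
      simpa using ((hasDerivAt_id t).sub_const x₁).const_mul (f' x₁)
    have h2 : HasDerivAt (fun x : ℝ => δ / 2 * (x - x₁) ^ 2) (δ * (t - x₁)) t := by
      have := (((hasDerivAt_id t).sub_const x₁).pow 2).const_mul (δ / 2)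
      refine this.congr_deriv ?_
      simp only [id_eq]
      ring
    exact (hder t ht).sub (h1.add h2)
  -- F is monotone on [x₁, x₂]
  have hmonF : MonotoneOn F (Icc x₁ x₂) := by
    apply monotoneOn_of_deriv_nonneg (convex_Icc x₁ x₂)
    · intro t ht
      exact ((hFder t (hsub ht)).continuousAt).continuousWithinAt
    · intro t ht
      rw [interior_Icc] at ht
      exact ((hFder t (hsub (Ioo_subset_Icc_self ht))).differentiableAt).differentiableWithinAt
    · intro t ht
      rw [interior_Icc] at ht
      have htI : t ∈ I := hsub (Ioo_subset_Icc_self ht)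
      rw [(hFder t htI).deriv]
      -- f' t - f' x₁ ≥ δ (t - x₁) by MVT for f'
      have hcont' : ContinuousOn f' (Icc x₁ t) := by
        intro y hy
        exact ((hder2 y (hsub ⟨hy.1, hy.2.trans ht.2.le⟩)).continuousAt).continuousWithinAt
      obtain ⟨d, hd, hdd⟩ := exists_hasDerivAt_eq_slope f' f'' ht.1 hcont'
        (fun y hy => hder2 y (hsub ⟨hy.1.le, hy.2.le.trans ht.2.le⟩))
      have hdI : d ∈ I := hsub ⟨hd.1.le, hd.2.le.trans ht.2.le⟩
      have hδd : δ ≤ f'' d := hbound d hdI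
      have htx : 0 < t - x₁ := by linarith [ht.1]
      have : δ * (t - x₁) ≤ f' t - f' x₁ := by
        have := hdd
        have h3 : f' t - f' x₁ = f'' d * (t - x₁) := by
          field_simp at this
          linarith [this]
        rw [h3]
        exact mul_le_mul_of_nonneg_right hδd htx.le
      linarith
  have hFineq : F x₁ ≤ F x₂ := hmonF ⟨le_refl x₁, hlt.le⟩ ⟨hlt.le, le_refl x₂⟩ hlt.le
  have hF1 : F x₁ = f x₁ := by simp [hF]
  have hF2 : F x₂ = f x₂ - (f' x₁ * (x₂ - x₁) + δ / 2 * (x₂ - x₁) ^ 2) := rfl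
  rw [hF1, hF2] at hFineq
  nlinarith [hf'0, hlt]

private lemma holder_key {I : Set ℝ} (hI : I.OrdConnected)
    (f f' f'' : ℝ → ℝ) (δ : ℝ) (hδ : 0 < δ)
    (hder : ∀ x ∈ I, HasDerivAt f (f' x) x)
    (hder2 : ∀ x ∈ I, HasDerivAt f' (f'' x) x)
    (hmono : StrictMonoOn f I)
    (hbound : ∀ x ∈ I, δ ≤ f'' x)
    {x₁ x₂ : ℝ} (hx₁ : x₁ ∈ I) (hx₂ : x₂ ∈ I) (hle : x₁ ≤ x₂) :
    |x₂ - x₁| ≤ Real.sqrt (2 / δ) * |f x₂ - f x₁| ^ ((1 : ℝ) / 2) := by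
  rcases eq_or_lt_of_le hle with heq | hlt
  · subst heq
    simp
  · have hkey := strong_key hI f f' f'' δ hδ hder hder2 hmono hbound hx₁ hx₂ hlt
    have hfd : 0 < f x₂ - f x₁ := sub_pos.mpr (hmono hx₁ hx₂ hlt)
    have habsf : |f x₂ - f x₁| = f x₂ - f x₁ := abs_of_pos hfd
    rw [habsf, ← Real.sqrt_eq_rpow]
    have h1 : (x₂ - x₁) ^ 2 ≤ 2 / δ * (f x₂ - f x₁) := by
      rw [div_mul_eq_mul_div, le_div_iff₀ hδ]
      nlinarith
    calc |x₂ - x₁| = Real.sqrt ((x₂ - x₁) ^ 2) := (Real.sqrt_sq_eq_abs _).symm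
      _ ≤ Real.sqrt (2 / δ * (f x₂ - f x₁)) := Real.sqrt_le_sqrt h1
      _ = Real.sqrt (2 / δ) * Real.sqrt (f x₂ - f x₁) := Real.sqrt_mul (by positivity) _

/-- Hölder continuity of the inverse of a C² convex strictly increasing function
with second derivative bounded below by δ > 0. -/
theorem stmt_0 (I : Set ℝ) (hI : I.OrdConnected)
    (f f' f'' g : ℝ → ℝ) (δ : ℝ) (hδ : 0 < δ)
    (hder : ∀ x ∈ I, HasDerivAt f (f' x) x)
    (hder2 : ∀ x ∈ I, HasDerivAt f' (f'' x) x)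
    (hcont : ContinuousOn f'' I)
    (hconv : ConvexOn ℝ I f)
    (hmono : StrictMonoOn f I)
    (hbound : ∀ x ∈ I, δ ≤ f'' x)
    (hinv : ∀ x ∈ I, g (f x) = x) :
    ∀ x₁ ∈ I, ∀ x₂ ∈ I,
      |g (f x₂) - g (f x₁)| ≤ Real.sqrt (2 / δ) * |f x₂ - f x₁| ^ ((1 : ℝ) / 2) := by
  intro x₁ hx₁ x₂ hx₂
  rw [hinv x₁ hx₁, hinv x₂ hx₂]
  rcases le_total x₁ x₂ with hle | hle
  · exact holder_key hI f f' f'' δ hδ hder hder2 hmono hbound hx₁ hx₂ hle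
  · have := holder_key hI f f' f'' δ hδ hder hder2 hmono hbound hx₂ hx₁ hle
    rwa [abs_sub_comm (f x₁) (f x₂), abs_sub_comm x₁ x₂] at this
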